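/- Let G be a stabilizer group of full rank N_A = |I| on I = I₁ ⊕ I₂ (so the corresponding stabilizer state is a pure state and ρ = 2^{-N_A}·Σ_{g∈G} g is a rank-one projector). If g ∈ G is such that its A₂-restriction p_{A₂}(g) commutes with the A₂-restriction p_{A₂}(h) of every element h ∈ G, then g lies in the product G_{A1}·G_{A2} of the subgroups of elements supported in A₁ and in A₂. Consequently, for a pure stabilizer state, the parameter r in any canonical generating set of a complementary subgroup is zero, and the partial-transpose negativity equals half the mutual information of A₁ and A₂. -/

import Mathlib

open scoped ComplexOrder Matrix

noncomputable section

/-- The single-qubit Pauli matrices `σ⁰, σˣ, σʸ, σᶻ`. -/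
def pauli : Fin 4 → Matrix (Fin 2) (Fin 2) ℂ :=
  ![1, !![0, 1; 1, 0], !![0, -Complex.I; Complex.I, 0], !![1, 0; 0, -1]]

/-- Configurations of the qubits on `I₁ ⊕ I₂`, presented in factorized form. -/
abbrev Config (I₁ I₂ : Type) := (I₁ → Fin 2) × (I₂ → Fin 2)

variable {I₁ I₂ : Type} [Fintype I₁] [Fintype I₂] [DecidableEq I₁] [DecidableEq I₂]

/-- The sign-free tensor product `⨂_{i ∈ I₁ ⊕ I₂} σ^{a(i)}` of single-qubit Pauli
matrices, as a matrix on the factorized configuration space. -/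
def pauliTensor (a : I₁ ⊕ I₂ → Fin 4) :
    Matrix (Config I₁ I₂) (Config I₁ I₂) ℂ :=
  fun c c' => ∏ i, pauli (a i) (Sum.elim c.1 c.2 i) (Sum.elim c'.1 c'.2 i)

/-- A Pauli operator on `I₁ ⊕ I₂`: `ε·⨂ᵢ σ^{a(i)}` with `ε ∈ {1,−1}`. -/
def IsPauli (M : Matrix (Config I₁ I₂) (Config I₁ I₂) ℂ) : Prop :=
  ∃ (ε : ℂ) (a : I₁ ⊕ I₂ → Fin 4), (ε = 1 ∨ ε = -1) ∧ M = ε • pauliTensor a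

/-- A Pauli operator supported in `A₁`, i.e. acting trivially on all sites of `I₂`. -/
def SupportedIn1 (M : Matrix (Config I₁ I₂) (Config I₁ I₂) ℂ) : Prop :=
  ∃ (ε : ℂ) (a : I₁ ⊕ I₂ → Fin 4), (ε = 1 ∨ ε = -1) ∧ M = ε • pauliTensor a ∧
    ∀ i : I₂, a (Sum.inr i) = 0

/-- A Pauli operator supported in `A₂`, i.e. acting trivially on all sites of `I₁`. -/
def SupportedIn2 (M : Matrix (Config I₁ I₂) (Config I₁ I₂) ℂ) : Prop :=
  ∃ (ε : ℂ) (a : I₁ ⊕ I₂ → Fin 4), (ε = 1 ∨ ε = -1) ∧ M = ε • pauliTensor a ∧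
    ∀ i : I₁, a (Sum.inl i) = 0

/-- A stabilizer group on `I₁ ⊕ I₂`: a finite abelian group of Pauli operators under
matrix multiplication not containing `-1`; every element is Hermitian and squares to
the identity. -/
structure StabilizerGroup (I₁ I₂ : Type) [Fintype I₁] [Fintype I₂]
    [DecidableEq I₁] [DecidableEq I₂] where
  carrier : Finset (Matrix (Config I₁ I₂) (Config I₁ I₂) ℂ)
  isPauli : ∀ g ∈ carrier, IsPauli g
  one_mem : (1 : Matrix (Config I₁ I₂) (Config I₁ I₂) ℂ) ∈ carrier
  mul_mem : ∀ g ∈ carrier, ∀ h ∈ carrier, g * h ∈ carrier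
  mul_comm : ∀ g ∈ carrier, ∀ h ∈ carrier, g * h = h * g
  neg_one_not_mem : (-1 : Matrix (Config I₁ I₂) (Config I₁ I₂) ℂ) ∉ carrier
  hermitian : ∀ g ∈ carrier, g.IsHermitian
  sq_eq_one : ∀ g ∈ carrier, g * g = 1

/-- The stabilizer density matrix `ρ = 2^{−N_A}·Σ_{g ∈ G} g`. -/
def stabDensity (G : StabilizerGroup I₁ I₂) :
    Matrix (Config I₁ I₂) (Config I₁ I₂) ℂ :=
  ((2 : ℂ) ^ (Fintype.card I₁ + Fintype.card I₂))⁻¹ • ∑ g ∈ G.carrier, g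

/-- The realignment of a matrix on a bipartite system:
`R_M[(c₁,c₁'),(c₂,c₂')] = M[(c₁,c₂),(c₁',c₂')]`. -/
def realign {C₁ C₂ : Type*} (M : Matrix (C₁ × C₂) (C₁ × C₂) ℂ) :
    Matrix (C₁ × C₁) (C₂ × C₂) ℂ :=
  fun p q => M (p.1, q.1) (p.2, q.2)

/-- The partial transpose on the second factor:
`M^{T₂}[(c₁,c₂),(c₁',c₂')] = M[(c₁,c₂'),(c₁',c₂)]`. -/
def ptranspose {C₁ C₂ R : Type*} (M : Matrix (C₁ × C₂) (C₁ × C₂) R) :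
    Matrix (C₁ × C₂) (C₁ × C₂) R :=
  fun c c' => M (c.1, c'.2) (c'.1, c.2)

/-- The trace norm `‖M‖₁ = Tr√(MᴴM)` of a complex matrix. -/
def traceNorm {m n : Type*} [Fintype m] [Fintype n] [DecidableEq n]
    (M : Matrix m n ℂ) : ℝ :=
  ((Matrix.posSemidef_conjTranspose_mul_self M).1.eigenvectorUnitary.1 *
    Matrix.diagonal (((↑) : ℝ → ℂ) ∘ Real.sqrt ∘ (Matrix.posSemidef_conjTranspose_mul_self M).1.eigenvalues) *
    (star (Matrix.posSemidef_conjTranspose_mul_self M).1.eigenvectorUnitary :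
      Matrix n n ℂ)).trace.re

end

noncomputable section

variable {I₁ I₂ : Type} [Fintype I₁] [Fintype I₂] [DecidableEq I₁] [DecidableEq I₂]

/-- Sign-free tensor product of single-qubit Pauli matrices on `I₂` alone. -/
def pauliTensorOn2 (b : I₂ → Fin 4) : Matrix (I₂ → Fin 2) (I₂ → Fin 2) ℂ :=
  fun c c' => ∏ i, pauli (b i) (c i) (c' i)

open scoped Classical in
/-- The `A₂`-restriction `p_{A₂}(g)` of a Pauli operator `g = ε·(P₁ ⊗ P₂)`, namely the
sign-free tensor factor `P₂` acting on `I₂` (and `0` on non-Pauli matrices). -/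
def pA2 (M : Matrix (Config I₁ I₂) (Config I₁ I₂) ℂ) :
    Matrix (I₂ → Fin 2) (I₂ → Fin 2) ℂ :=
  if h : IsPauli M then
    pauliTensorOn2 (fun i => Classical.choose (Classical.choose_spec h) (Sum.inr i))
  else 0

/-- `z`, `w`, `wbar` form a canonical generating set with parameters `(r,s)` of the
group with carrier `Hcar`: they are independent generators of `Hcar` (so
`|Hcar| = 2^{r+2s}`), each `p_{A₂}(zᵢ)` commutes with the `A₂`-restrictions of all
listed generators, and each `p_{A₂}(wᵢ)` anticommutes with `p_{A₂}(w̄ᵢ)` and commutes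
with the `A₂`-restrictions of all other listed generators. -/
def CanonicalGenSet (Hcar : Finset (Matrix (Config I₁ I₂) (Config I₁ I₂) ℂ))
    (r s : ℕ) (z : Fin r → Matrix (Config I₁ I₂) (Config I₁ I₂) ℂ)
    (w wbar : Fin s → Matrix (Config I₁ I₂) (Config I₁ I₂) ℂ) : Prop :=
  (∀ i, z i ∈ Hcar) ∧ (∀ i, w i ∈ Hcar) ∧ (∀ i, wbar i ∈ Hcar) ∧
  (∀ g ∈ Hcar, g ∈ Submonoid.closure (Set.range z ∪ Set.range w ∪ Set.range wbar)) ∧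
  Hcar.card = 2 ^ (r + 2 * s) ∧
  (∀ i j, Commute (pA2 (z i)) (pA2 (z j))) ∧
  (∀ i j, Commute (pA2 (z i)) (pA2 (w j))) ∧
  (∀ i j, Commute (pA2 (z i)) (pA2 (wbar j))) ∧
  (∀ i j, Commute (pA2 (w i)) (pA2 (w j))) ∧
  (∀ i j, Commute (pA2 (wbar i)) (pA2 (wbar j))) ∧
  (∀ i j, i ≠ j → Commute (pA2 (w i)) (pA2 (wbar j))) ∧
  (∀ i, pA2 (w i) * pA2 (wbar i) = -(pA2 (wbar i) * pA2 (w i)))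

end


noncomputable section AuxProof

open Matrix

namespace StabAux

variable {n : Type} [Fintype n] [DecidableEq n]

/-- Entrywise tensor product of a family of `2×2` matrices. -/
def tp (M : n → Matrix (Fin 2) (Fin 2) ℂ) : Matrix (n → Fin 2) (n → Fin 2) ℂ :=
  fun f f' => ∏ i, M i (f i) (f' i)

lemma tp_mul (M N : n → Matrix (Fin 2) (Fin 2) ℂ) :
    tp M * tp N = tp (fun i => M i * N i) := by
  ext f f'
  show ∑ g : n → Fin 2, (∏ i, M i (f i) (g i)) * ∏ i, N i (g i) (f' i)
      = ∏ i, (M i * N i) (f i) (f' i)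
  simp only [Matrix.mul_apply, ← Finset.prod_mul_distrib]
  rw [Fintype.prod_sum fun i j => M i (f i) j * N i j (f' i)]

lemma tp_one : tp (fun _ : n => (1 : Matrix (Fin 2) (Fin 2) ℂ)) = 1 := by
  ext f f'
  by_cases h : f = f'
  · subst h; simp [tp, Matrix.one_apply]
  · obtain ⟨i, hi⟩ := Function.ne_iff.mp h
    rw [tp]
    show (∏ j, (1 : Matrix (Fin 2) (Fin 2) ℂ) (f j) (f' j)) = (1 : Matrix (n → Fin 2) (n → Fin 2) ℂ) f f'
    rw [Finset.prod_eq_zero (Finset.mem_univ i) (by simp [Matrix.one_apply, hi]),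
      Matrix.one_apply_ne h]

lemma trace_tp (M : n → Matrix (Fin 2) (Fin 2) ℂ) :
    (tp M).trace = ∏ i, (M i).trace := by
  show ∑ f : n → Fin 2, ∏ i, M i (f i) (f i) = ∏ i, ∑ j, M i j j
  rw [Fintype.prod_sum fun i j => M i j j]

lemma tp_conjTranspose (M : n → Matrix (Fin 2) (Fin 2) ℂ) :
    (tp M)ᴴ = tp (fun i => (M i)ᴴ) := by
  ext f f'
  simp [tp, Matrix.conjTranspose_apply, map_prod]

lemma pauli_mul_self (b : Fin 4) : pauli b * pauli b = 1 := by
  fin_cases b <;>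
    simp [pauli, Matrix.one_fin_two, Matrix.mul_fin_two, Complex.I_mul_I] <;>
    norm_num

lemma trace_pauli_mul_of_ne {b c : Fin 4} (h : b ≠ c) : (pauli b * pauli c).trace = 0 := by
  fin_cases b <;> fin_cases c <;> simp_all [pauli, Matrix.one_fin_two, Matrix.mul_fin_two,
    Matrix.trace_fin_two, Complex.I_mul_I] <;> ring

lemma trace_pauli_of_ne {b : Fin 4} (h : b ≠ 0) : (pauli b).trace = 0 := by
  fin_cases b <;> simp_all [pauli, Matrix.trace_fin_two]

lemma pauli_conjTranspose (b : Fin 4) : (pauli b)ᴴ = pauli b := by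
  fin_cases b <;> ext i j <;> fin_cases i <;> fin_cases j <;>
    simp [pauli, Matrix.conjTranspose_apply, Matrix.one_fin_two]

lemma pauli_zero : pauli 0 = 1 := rfl

end StabAux

namespace StabMain

open StabAux Matrix

open scoped Kronecker

variable {I₁ I₂ : Type} [Fintype I₁] [Fintype I₂] [DecidableEq I₁] [DecidableEq I₂]

/-- The equivalence between factorized configurations and functions on the sum type. -/
def cEquiv : Config I₁ I₂ ≃ (I₁ ⊕ I₂ → Fin 2) where
  toFun c := Sum.elim c.1 c.2
  invFun f := (f ∘ Sum.inl, f ∘ Sum.inr)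
  left_inv c := rfl
  right_inv f := funext fun i => by cases i <;> rfl

lemma pauliTensor_eq (a : I₁ ⊕ I₂ → Fin 4) :
    pauliTensor a = (tp (fun i => pauli (a i))).submatrix (cEquiv (I₁ := I₁) (I₂ := I₂)) cEquiv :=
  rfl

lemma trace_submatrix_cEquiv (A : Matrix (I₁ ⊕ I₂ → Fin 2) (I₁ ⊕ I₂ → Fin 2) ℂ) :
    (A.submatrix (cEquiv (I₁ := I₁) (I₂ := I₂)) cEquiv).trace = A.trace :=
  Fintype.sum_equiv cEquiv _ _ fun _ => rfl

lemma pauliTensor_mul (a b : I₁ ⊕ I₂ → Fin 4) :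
    pauliTensor a * pauliTensor b
      = (tp (fun i => pauli (a i)) * tp (fun i => pauli (b i))).submatrix
          (cEquiv (I₁ := I₁) (I₂ := I₂)) cEquiv := by
  rw [pauliTensor_eq, pauliTensor_eq, Matrix.submatrix_mul_equiv]

lemma pauliTensor_mul_self (a : I₁ ⊕ I₂ → Fin 4) :
    pauliTensor (I₁ := I₁) (I₂ := I₂) a * pauliTensor a = 1 := by
  rw [pauliTensor_mul, tp_mul]
  have : (fun i => pauli (a i) * pauli (a i)) = fun _ : I₁ ⊕ I₂ => (1 : Matrix (Fin 2) (Fin 2) ℂ) :=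
    funext fun i => pauli_mul_self (a i)
  rw [this, tp_one, Matrix.submatrix_one_equiv]

lemma trace_pauliTensor_mul_of_ne {a b : I₁ ⊕ I₂ → Fin 4} (h : a ≠ b) :
    (pauliTensor (I₁ := I₁) (I₂ := I₂) a * pauliTensor b).trace = 0 := by
  obtain ⟨i, hi⟩ := Function.ne_iff.mp h
  rw [pauliTensor_mul, trace_submatrix_cEquiv, tp_mul, trace_tp]
  exact Finset.prod_eq_zero (Finset.mem_univ i) (trace_pauli_mul_of_ne hi)

lemma trace_pauliTensor_of_ne {a : I₁ ⊕ I₂ → Fin 4} (h : a ≠ 0) :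
    (pauliTensor (I₁ := I₁) (I₂ := I₂) a).trace = 0 := by
  obtain ⟨i, hi⟩ := Function.ne_iff.mp h
  rw [pauliTensor_eq, trace_submatrix_cEquiv, trace_tp]
  exact Finset.prod_eq_zero (Finset.mem_univ i) (trace_pauli_of_ne hi)

lemma pauliTensor_zero : pauliTensor (I₁ := I₁) (I₂ := I₂) 0 = 1 := by
  rw [pauliTensor_eq]
  have : (fun i : I₁ ⊕ I₂ => pauli ((0 : I₁ ⊕ I₂ → Fin 4) i))
      = fun _ : I₁ ⊕ I₂ => (1 : Matrix (Fin 2) (Fin 2) ℂ) := funext fun i => rfl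
  rw [this, tp_one, Matrix.submatrix_one_equiv]

lemma pauliTensor_conjTranspose (a : I₁ ⊕ I₂ → Fin 4) :
    (pauliTensor (I₁ := I₁) (I₂ := I₂) a)ᴴ = pauliTensor a := by
  rw [pauliTensor_eq, Matrix.conjTranspose_submatrix, tp_conjTranspose]
  have h1 : (fun i : I₁ ⊕ I₂ => (pauli (a i))ᴴ) = fun i => pauli (a i) :=
    funext fun i => pauli_conjTranspose (a i)
  rw [h1]

lemma card_config : (Fintype.card (Config I₁ I₂) : ℂ)
    = (2 : ℂ) ^ (Fintype.card I₁ + Fintype.card I₂) := by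
  simp [Config, Fintype.card_prod, Fintype.card_fun, pow_add]

lemma two_pow_ne_zero (m : ℕ) : ((2 : ℂ) ^ m) ≠ 0 := pow_ne_zero _ two_ne_zero

/-- Uniqueness of the Pauli word in a signed Pauli decomposition. -/
lemma pauli_word_unique {ε ε' : ℂ} {a b : I₁ ⊕ I₂ → Fin 4}
    (hε' : ε' = 1 ∨ ε' = -1)
    (h : ε • pauliTensor (I₁ := I₁) (I₂ := I₂) a = ε' • pauliTensor b) : a = b := by
  by_contra hab
  have h1 := congrArg (fun M => (M * pauliTensor b).trace) h
  simp only [Matrix.smul_mul, Matrix.trace_smul, smul_eq_mul] at h1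
  rw [trace_pauliTensor_mul_of_ne hab, pauliTensor_mul_self, Matrix.trace_one, mul_zero] at h1
  rw [card_config] at h1
  rcases hε' with rfl | rfl <;> simp at h1 <;>
    exact two_pow_ne_zero _ h1.symm

/-- Identification of `pA2` on signed Pauli words. -/
lemma pA2_eq {ε : ℂ} (hε : ε = 1 ∨ ε = -1) (a : I₁ ⊕ I₂ → Fin 4) :
    pA2 (ε • pauliTensor (I₁ := I₁) (I₂ := I₂) a)
      = pauliTensorOn2 (fun i => a (Sum.inr i)) := by
  have hp : IsPauli (ε • pauliTensor (I₁ := I₁) (I₂ := I₂) a) := ⟨ε, a, hε, rfl⟩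
  rw [pA2, dif_pos hp]
  obtain ⟨hs, heq⟩ := Classical.choose_spec (Classical.choose_spec hp)
  have := pauli_word_unique hs heq
  rw [← this]

lemma pauliTensorOn2_eq_tp (b : I₂ → Fin 4) :
    pauliTensorOn2 b = tp (fun i => pauli (b i)) := rfl

/-- Kronecker factorization of `pauliTensor`. -/
lemma pauliTensor_kron (a : I₁ ⊕ I₂ → Fin 4) :
    pauliTensor (I₁ := I₁) (I₂ := I₂) a
      = tp (fun i => pauli (a (Sum.inl i))) ⊗ₖ tp (fun i => pauli (a (Sum.inr i))) := by
  ext c c'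
  show (∏ i : I₁ ⊕ I₂, pauli (a i) (Sum.elim c.1 c.2 i) (Sum.elim c'.1 c'.2 i)) = _
  rw [Fintype.prod_sum_type]
  rfl

/-- Trace of a Hermitian idempotent complex matrix is a natural number. -/
lemma trace_idem {m : Type} [Fintype m] [DecidableEq m] {A : Matrix m m ℂ}
    (hA : A.IsHermitian) (h2 : A * A = A) : ∃ k : ℕ, A.trace = (k : ℂ) := by
  classical
  set U : Matrix m m ℂ := (hA.eigenvectorUnitary : Matrix m m ℂ) with hU
  set D : Matrix m m ℂ := Matrix.diagonal (RCLike.ofReal ∘ hA.eigenvalues) with hD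
  have hUU : star U * U = 1 := Matrix.mem_unitaryGroup_iff'.mp hA.eigenvectorUnitary.2
  have hUU' : U * star U = 1 := Matrix.mem_unitaryGroup_iff.mp hA.eigenvectorUnitary.2
  have hspec : A = U * D * star U := hA.spectral_theorem
  have hDD : D * D = D := by
    have h3 : U * D * star U * (U * D * star U) = U * D * star U := by
      rw [← hspec]; exact h2
    calc D * D = (star U * U) * D * (star U * U) * D * (star U * U) := by
          rw [hUU]; simp
      _ = star U * (U * D * star U * (U * D * star U)) * U := by
          simp only [mul_assoc]
      _ = star U * (U * D * star U) * U := by rw [h3]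
      _ = (star U * U) * D * (star U * U) := by simp only [mul_assoc]
      _ = D := by rw [hUU]; simp
  have hev : ∀ i, hA.eigenvalues i = 0 ∨ hA.eigenvalues i = 1 := by
    intro i
    have h4 : (Matrix.diagonal (fun i => (RCLike.ofReal (hA.eigenvalues i) : ℂ)
        * RCLike.ofReal (hA.eigenvalues i))) = D := by
      rw [hD, ← Matrix.diagonal_mul_diagonal]; exact hDD
    have h5 := congrFun (Matrix.diagonal_injective h4) i
    have h6 : hA.eigenvalues i * hA.eigenvalues i = hA.eigenvalues i := by
      have := h5
      simp only [Function.comp_apply] at this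
      exact_mod_cast this
    have h7 : hA.eigenvalues i ^ 2 = hA.eigenvalues i := by rw [sq]; exact h6
    exact eq_zero_or_one_of_sq_eq_self h7
  have htr : A.trace = ∑ i, (hA.eigenvalues i : ℂ) := by
    conv_lhs => rw [hspec]
    rw [Matrix.trace_mul_cycle, hUU, one_mul, hD, Matrix.trace_diagonal]
    rfl
  refine ⟨(Finset.univ.filter fun i => hA.eigenvalues i = 1).card, ?_⟩
  rw [htr]
  rw [show (∑ i, ((hA.eigenvalues i : ℝ) : ℂ))
      = ∑ i, (if hA.eigenvalues i = 1 then (1 : ℂ) else 0) from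
    Finset.sum_congr rfl fun i _ => by rcases hev i with h | h <;> simp [h]]
  simp [Finset.sum_boole]

end StabMain

end AuxProof

/-- For a pure (full-rank) stabilizer state: if `g ∈ G` is such that its
`A₂`-restriction commutes with the `A₂`-restriction of every element of `G`, then
`g` lies in the product `G_{A1}·G_{A2}` of the subgroups of elements supported in
`A₁` and in `A₂`. -/
theorem mem_prod_of_pA2_commute {I₁ I₂ : Type} [Fintype I₁] [Fintype I₂]
    [DecidableEq I₁] [DecidableEq I₂]
    (G : StabilizerGroup I₁ I₂)
    (hfull : G.carrier.card = 2 ^ (Fintype.card I₁ + Fintype.card I₂))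
    (g : Matrix (Config I₁ I₂) (Config I₁ I₂) ℂ) (hg : g ∈ G.carrier)
    (hcomm : ∀ h ∈ G.carrier, Commute (pA2 g) (pA2 h)) :
    ∃ g₁ g₂, g₁ ∈ G.carrier ∧ SupportedIn1 g₁ ∧ g₂ ∈ G.carrier ∧ SupportedIn2 g₂ ∧
      g = g₁ * g₂ := by
  classical
  obtain ⟨ε, a, hε, hga⟩ := G.isPauli g hg
  set N : ℕ := Fintype.card I₁ + Fintype.card I₂ with hN
  -- the purely-A₂ Pauli word extracted from `g`, and purely-A₁ word
  set a' : I₁ ⊕ I₂ → Fin 4 := Sum.elim 0 (fun i => a (Sum.inr i)) with ha'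
  set a'' : I₁ ⊕ I₂ → Fin 4 := Sum.elim (fun i => a (Sum.inl i)) 0 with ha''
  set P : Matrix (Config I₁ I₂) (Config I₁ I₂) ℂ := pauliTensor a' with hPdef
  have hPP : P * P = 1 := StabMain.pauliTensor_mul_self a'
  have hPH : Pᴴ = P := StabMain.pauliTensor_conjTranspose a'
  -- Kronecker form of P
  have hPkron : P = Matrix.kroneckerMap (· * ·) (1 : Matrix (I₁ → Fin 2) (I₁ → Fin 2) ℂ)
      (StabAux.tp fun i => pauli (a (Sum.inr i))) := by
    rw [hPdef, StabMain.pauliTensor_kron]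
    congr 1
    have h1 : (fun i : I₁ => pauli (a' (Sum.inl i)))
        = fun _ : I₁ => (1 : Matrix (Fin 2) (Fin 2) ℂ) := funext fun i => rfl
    rw [h1, StabAux.tp_one]
  -- P commutes with every element of G
  have hPcomm : ∀ h ∈ G.carrier, P * h = h * P := by
    intro h hh
    obtain ⟨δ, b, hδ, hhb⟩ := G.isPauli h hh
    have hc := hcomm h hh
    rw [hga, hhb, StabMain.pA2_eq hε, StabMain.pA2_eq hδ] at hc
    rw [hhb, hPkron, StabMain.pauliTensor_kron b, Matrix.mul_smul, Matrix.smul_mul]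
    congr 1
    rw [← Matrix.mul_kronecker_mul, ← Matrix.mul_kronecker_mul, one_mul, mul_one]
    have hc' : StabAux.tp (fun i => pauli (a (Sum.inr i)))
          * StabAux.tp (fun i => pauli (b (Sum.inr i)))
        = StabAux.tp (fun i => pauli (b (Sum.inr i)))
          * StabAux.tp (fun i => pauli (a (Sum.inr i))) := hc
    rw [hc']
  -- the key dichotomy: P or -P belongs to G
  have key : P ∈ G.carrier ∨ ((-1 : ℂ) • P) ∈ G.carrier := by
    by_contra hn
    push_neg at hn
    obtain ⟨hn1, hn2⟩ := hn
    set S : Matrix (Config I₁ I₂) (Config I₁ I₂) ℂ := ∑ h ∈ G.carrier, h with hS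
    have hmulS : ∀ g' ∈ G.carrier, g' * S = S := by
      intro g' hg'
      rw [hS, Finset.mul_sum]
      refine Finset.sum_nbij' (fun h => g' * h) (fun h => g' * h) ?_ ?_ ?_ ?_ ?_
      · intro h hh; exact G.mul_mem g' hg' h hh
      · intro h hh; exact G.mul_mem g' hg' h hh
      · intro h _
        show g' * (g' * h) = h
        rw [← mul_assoc, G.sq_eq_one g' hg', one_mul]
      · intro h _
        show g' * (g' * h) = h
        rw [← mul_assoc, G.sq_eq_one g' hg', one_mul]
      · intro h _; rfl
    have hSS : S * S = ((2 : ℂ) ^ N) • S := by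
      calc S * S = ∑ g' ∈ G.carrier, g' * S := by rw [hS, Finset.sum_mul]
        _ = ∑ _g' ∈ G.carrier, S := Finset.sum_congr rfl fun g' hg' => hmulS g' hg'
        _ = G.carrier.card • S := Finset.sum_const S
        _ = ((G.carrier.card : ℂ)) • S := (Nat.cast_smul_eq_nsmul ℂ _ _).symm
        _ = ((2 : ℂ) ^ N) • S := by rw [hfull]; norm_num
    have hPS : P * S = S * P := by
      rw [hS, Finset.mul_sum, Finset.sum_mul]
      exact Finset.sum_congr rfl fun h hh => hPcomm h hh
    have htrS : S.trace = (2 : ℂ) ^ N := by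
      rw [hS, Matrix.trace_sum, Finset.sum_eq_single_of_mem 1 G.one_mem ?side]
      · rw [Matrix.trace_one, StabMain.card_config]
      case side =>
        intro h hh hne
        obtain ⟨δ, b, hδ, hhb⟩ := G.isPauli h hh
        by_cases hb : b = 0
        · exfalso
          subst hb
          rw [StabMain.pauliTensor_zero] at hhb
          rcases hδ with rfl | rfl
          · rw [one_smul] at hhb; exact hne hhb
          · rw [hhb] at hh
            have hneg : (-1 : Matrix (Config I₁ I₂) (Config I₁ I₂) ℂ) ∈ G.carrier := by
              simpa using hh
            exact G.neg_one_not_mem hneg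
        · rw [hhb, Matrix.trace_smul, StabMain.trace_pauliTensor_of_ne hb, smul_zero]
    have htrSP : (S * P).trace = 0 := by
      rw [hS, Finset.sum_mul, Matrix.trace_sum]
      refine Finset.sum_eq_zero fun h hh => ?_
      obtain ⟨δ, b, hδ, hhb⟩ := G.isPauli h hh
      have hba : b ≠ a' := by
        rintro rfl
        rcases hδ with rfl | rfl
        · rw [one_smul, ← hPdef] at hhb
          exact hn1 (hhb ▸ hh)
        · rw [← hPdef] at hhb
          exact hn2 (hhb ▸ hh)
      rw [hhb, hPdef, Matrix.smul_mul, Matrix.trace_smul,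
        StabMain.trace_pauliTensor_mul_of_ne hba, smul_zero]
    set T : Matrix (Config I₁ I₂) (Config I₁ I₂) ℂ := S + S * P with hT
    have hTT : T * T = ((2 : ℂ) ^ (N + 1)) • T := by
      calc T * T = S * S + S * S * P + S * (P * S) + S * (P * S) * P := by
            rw [hT]; noncomm_ring
        _ = S * S + S * S * P + S * (S * P) + S * (S * P) * P := by rw [hPS]
        _ = S * S + S * S * P + S * S * P + S * S * (P * P) := by noncomm_ring
        _ = S * S + S * S * P + S * S * P + S * S := by rw [hPP, mul_one]
        _ = ((2:ℂ)^N) • S + (((2:ℂ)^N) • S) * P + (((2:ℂ)^N) • S) * P + ((2:ℂ)^N) • S := by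
            rw [hSS]
        _ = ((2 : ℂ) ^ (N + 1)) • (S + S * P) := by
            rw [Matrix.smul_mul, pow_succ]
            module
    have htrT : T.trace = (2 : ℂ) ^ N := by
      rw [hT, Matrix.trace_add, htrS, htrSP, add_zero]
    have hSH : Sᴴ = S := by
      rw [hS, Matrix.conjTranspose_sum]
      exact Finset.sum_congr rfl fun h hh => G.hermitian h hh
    have hTH : Tᴴ = T := by
      rw [hT, Matrix.conjTranspose_add, Matrix.conjTranspose_mul, hSH, hPH, ← hPS]
    set c : ℂ := ((2 : ℂ) ^ (N + 1))⁻¹ with hc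
    have hcstar : star c = c := by
      rw [hc]
      simp
    have hρH : (c • T).IsHermitian := by
      show (c • T)ᴴ = c • T
      rw [Matrix.conjTranspose_smul, hTH, hcstar]
    have hρI : (c • T) * (c • T) = c • T := by
      rw [Matrix.smul_mul, Matrix.mul_smul, hTT, smul_smul, smul_smul]
      congr 1
      rw [mul_assoc, hc, inv_mul_cancel₀ (StabMain.two_pow_ne_zero _), mul_one]
    obtain ⟨k, hk⟩ := StabMain.trace_idem hρH hρI
    have htrρ : (c • T).trace = 1 / 2 := by
      rw [Matrix.trace_smul, htrT, hc, smul_eq_mul, pow_succ, mul_inv]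
      rw [mul_comm ((2:ℂ)^N)⁻¹, mul_assoc, inv_mul_cancel₀ (StabMain.two_pow_ne_zero N), mul_one]
      norm_num
    rw [htrρ] at hk
    have h2k : ((2 * k : ℕ) : ℂ) = ((1 : ℕ) : ℂ) := by
      push_cast
      rw [← hk]
      ring
    have := Nat.cast_inj (R := ℂ).mp h2k
    omega
  -- multiplication lemma : g * P is supported in A₁
  have hgP : g * P = ε • pauliTensor a'' := by
    rw [hga, Matrix.smul_mul]
    congr 1
    rw [hPkron, StabMain.pauliTensor_kron a, ← Matrix.mul_kronecker_mul, mul_one,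
      StabAux.tp_mul, StabMain.pauliTensor_kron a'']
    congr 1
    have h2 : (fun i : I₂ => pauli (a (Sum.inr i)) * pauli (a (Sum.inr i)))
        = fun i : I₂ => pauli (a'' (Sum.inr i)) := by
      funext i
      rw [StabAux.pauli_mul_self]
      rfl
    rw [h2]
  rcases key with hPmem | hPmem
  · refine ⟨g * P, P, G.mul_mem g hg P hPmem, ?_, hPmem, ?_, ?_⟩
    · exact ⟨ε, a'', hε, hgP, fun i => rfl⟩
    · exact ⟨1, a', Or.inl rfl, (one_smul ℂ _).symm, fun i => rfl⟩
    · rw [mul_assoc, hPP, mul_one]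
  · refine ⟨g * ((-1 : ℂ) • P), (-1 : ℂ) • P,
      G.mul_mem g hg _ hPmem, ?_, hPmem, ?_, ?_⟩
    · refine ⟨-ε, a'', ?_, ?_, fun i => rfl⟩
      · rcases hε with rfl | rfl
        · exact Or.inr rfl
        · exact Or.inl (by norm_num)
      · rw [Matrix.mul_smul, hgP, smul_smul, neg_one_mul]
    · exact ⟨-1, a', Or.inr rfl, rfl, fun i => rfl⟩
    · have hsq : (-1 : ℂ) • P * (-1 : ℂ) • P = 1 := by
        rw [Matrix.smul_mul, Matrix.mul_smul, smul_smul, hPP]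
        norm_num
      rw [mul_assoc, hsq, mul_one]
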